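/- Suppose E(y_{k+1}) ≤ E(y_k)·(|1−λ| + λ² C₁√E(y_k))² for all λ ∈ [0,m] with m ≥ 1 and E(y_k) > 0 for all k, and that E(y_k)/E(y_{k+1}) satisfies E(y_{k+1})/E(y_k) → 0. Furthermore suppose 2E(y_{k+1}) = 2(1−λ_k)²E(y_k) + 2λ_k²(1−λ_k)⟨v_k, w_k⟩ + λ_k⁴‖w_k‖², where ‖v_k‖² = 2E(y_k), |⟨v_k,w_k⟩|/E(y_k) → 0, ‖w_k‖²/E(y_k) → 0, and λ_k ∈ [0,m]. Then (1−λ_k)² → 0, i.e. λ_k → 1. -/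

import Mathlib

open Filter

/-- Lemma 2.18 (abstract form): if `E(y_{k+1}) ≤ E(y_k)(|1-λ| + λ²C₁√E(y_k))²` for all
`λ ∈ [0,m]` (`m ≥ 1`), `E(y_k) > 0`, `E(y_{k+1})/E(y_k) → 0`, and the algebraic
identity `2E(y_{k+1}) = 2(1-λ_k)²E(y_k) + 2λ_k²(1-λ_k)⟨v_k,w_k⟩ + λ_k⁴‖w_k‖²` holds
with `‖v_k‖² = 2E(y_k)`, `|⟨v_k,w_k⟩|/E(y_k) → 0`, `‖w_k‖²/E(y_k) → 0` and
`λ_k ∈ [0,m]`, then `(1-λ_k)² → 0`, i.e. `λ_k → 1`. -/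
theorem stmt12 (X : Type*) [NormedAddCommGroup X] [InnerProductSpace ℝ X]
    (m C₁ : ℝ) (hm : 1 ≤ m) (hC₁ : 0 < C₁)
    (E lam : ℕ → ℝ) (v w : ℕ → X)
    (hEpos : ∀ k, 0 < E k)
    (hlam : ∀ k, lam k ∈ Set.Icc (0 : ℝ) m)
    (hrec : ∀ k, ∀ l ∈ Set.Icc (0 : ℝ) m,
      E (k + 1) ≤ E k * (|1 - l| + l ^ 2 * C₁ * Real.sqrt (E k)) ^ 2)
    (hratio : Tendsto (fun k => E (k + 1) / E k) atTop (nhds 0))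
    (hv : ∀ k, ‖v k‖ ^ 2 = 2 * E k)
    (hid : ∀ k, 2 * E (k + 1) =
      2 * (1 - lam k) ^ 2 * E k
        + 2 * (lam k) ^ 2 * (1 - lam k) * (inner ℝ (v k) (w k) : ℝ)
        + (lam k) ^ 4 * ‖w k‖ ^ 2)
    (hvw : Tendsto (fun k => |(inner ℝ (v k) (w k) : ℝ)| / E k) atTop (nhds 0))
    (hw : Tendsto (fun k => ‖w k‖ ^ 2 / E k) atTop (nhds 0)) :
    Tendsto (fun k => (1 - lam k) ^ 2) atTop (nhds 0) ∧
    Tendsto lam atTop (nhds 1) := by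
  have hsq : Tendsto (fun k => (1 - lam k) ^ 2) atTop (nhds 0) := by
    have habs : ∀ k, |1 - lam k| ≤ m := by
      intro k
      obtain ⟨h0, hM⟩ := hlam k
      rw [abs_le]
      constructor <;> nlinarith
    have heq : ∀ k, (1 - lam k) ^ 2 =
        E (k + 1) / E k
          - (lam k) ^ 2 * (1 - lam k) * ((inner ℝ (v k) (w k) : ℝ) / E k)
          - (lam k) ^ 4 / 2 * (‖w k‖ ^ 2 / E k) := by
      intro k
      have hE := (hEpos k).ne'
      have := hid k
      field_simp
      linear_combination (-1) * this
    have hA : Tendsto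
        (fun k => (lam k) ^ 2 * (1 - lam k) * ((inner ℝ (v k) (w k) : ℝ) / E k))
        atTop (nhds 0) := by
      apply squeeze_zero_norm (a := fun k => m ^ 2 * m * (|(inner ℝ (v k) (w k) : ℝ)| / E k))
      · intro k
        obtain ⟨h0, hM⟩ := hlam k
        have hEk := (hEpos k).le
        have hp : lam k ^ 2 ≤ m ^ 2 := by nlinarith
        have h2 : lam k ^ 2 * |1 - lam k| ≤ m ^ 2 * m :=
          mul_le_mul hp (habs k) (abs_nonneg _) (by positivity)
        have hnn : (0:ℝ) ≤ |(inner ℝ (v k) (w k) : ℝ)| / E k := by positivity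
        calc ‖(lam k) ^ 2 * (1 - lam k) * ((inner ℝ (v k) (w k) : ℝ) / E k)‖
            = lam k ^ 2 * |1 - lam k| * (|(inner ℝ (v k) (w k) : ℝ)| / E k) := by
              rw [norm_mul, norm_mul, Real.norm_eq_abs, Real.norm_eq_abs, Real.norm_eq_abs,
                abs_div, abs_of_nonneg hEk, abs_pow, sq_abs]
          _ ≤ m ^ 2 * m * (|(inner ℝ (v k) (w k) : ℝ)| / E k) :=
              mul_le_mul_of_nonneg_right h2 hnn
      · simpa using hvw.const_mul (m ^ 2 * m)
    have hB : Tendsto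
        (fun k => (lam k) ^ 4 / 2 * (‖w k‖ ^ 2 / E k)) atTop (nhds 0) := by
      apply squeeze_zero_norm (a := fun k => m ^ 4 / 2 * (‖w k‖ ^ 2 / E k))
      · intro k
        obtain ⟨h0, hM⟩ := hlam k
        have hEk := (hEpos k).le
        have hwk : (0:ℝ) ≤ ‖w k‖ ^ 2 / E k := by positivity
        have hp : lam k ^ 4 / 2 ≤ m ^ 4 / 2 := by nlinarith [pow_le_pow_left₀ h0 hM 4]
        calc ‖(lam k) ^ 4 / 2 * (‖w k‖ ^ 2 / E k)‖
            = lam k ^ 4 / 2 * (‖w k‖ ^ 2 / E k) := by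
              rw [Real.norm_eq_abs, abs_of_nonneg (by positivity)]
          _ ≤ m ^ 4 / 2 * (‖w k‖ ^ 2 / E k) := mul_le_mul_of_nonneg_right hp hwk
      · simpa using hw.const_mul (m ^ 4 / 2)
    have h := (hratio.sub hA).sub hB
    simp only [sub_zero] at h
    exact h.congr fun k => (heq k).symm
  refine ⟨hsq, ?_⟩
  have habs0 : Tendsto (fun k => |1 - lam k|) atTop (nhds 0) := by
    have h := (Real.continuous_sqrt.tendsto 0).comp hsq
    simpa [Function.comp_def, Real.sqrt_sq_eq_abs] using h
  rw [← tendsto_sub_nhds_zero_iff]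
  apply squeeze_zero_norm _ habs0
  intro k
  rw [Real.norm_eq_abs, abs_sub_comm]
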